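/- Let A be a nonzero copositive n×n matrix on the boundary of the copositive cone, and suppose A is orthogonal to a completely positive matrix M having no zero rows. Then there is a positive-definite diagonal matrix D such that Ā = D⁻¹ A D⁻¹ satisfies Ā_{ii} ≤ Σ_{j≠i} |Ā_{ij}| for all i. -/

import Mathlib

open Matrix BigOperators

def Copositive {ι : Type} [Fintype ι] (A : Matrix ι ι ℝ) : Prop :=
  A.IsSymm ∧ ∀ x : ι → ℝ, (∀ i, 0 ≤ x i) → 0 ≤ x ⬝ᵥ A.mulVec x

def CompletelyPositive {ι : Type} [Fintype ι] (M : Matrix ι ι ℝ) : Prop :=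
  ∃ (p : ℕ) (v : Fin p → ι → ℝ), (∀ j i, 0 ≤ v j i) ∧
    M = ∑ j, Matrix.vecMulVec (v j) (v j)

noncomputable def cpRank {ι : Type} [Fintype ι] (M : Matrix ι ι ℝ) : ℕ :=
  sInf {p : ℕ | ∃ v : Fin p → ι → ℝ, (∀ j i, 0 ≤ v j i) ∧
    M = ∑ j, Matrix.vecMulVec (v j) (v j)}

noncomputable def pmax (n : ℕ) : ℕ :=
  sSup {k : ℕ | ∃ M : Matrix (Fin n) (Fin n) ℝ, CompletelyPositive M ∧ cpRank M = k}

def ExtremeCopositive {ι : Type} [Fintype ι] (A : Matrix ι ι ℝ) : Prop :=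
  Copositive A ∧ A ≠ 0 ∧ ∀ B C : Matrix ι ι ℝ, Copositive B → Copositive C → A = B + C →
    ∃ s t : ℝ, 0 ≤ s ∧ 0 ≤ t ∧ B = s • A ∧ C = t • A

def E12 (k : ℕ) : Matrix (Fin k) (Fin k) ℝ :=
  Matrix.of fun i j => if (i.val = 0 ∧ j.val = 1) ∨ (i.val = 1 ∧ j.val = 0) then 1 else 0

def InOrbitOfE12 {k : ℕ} (S : Matrix (Fin k) (Fin k) ℝ) : Prop :=
  ∃ (d : Fin k → ℝ) (σ : Equiv.Perm (Fin k)), (∀ i, 0 < d i) ∧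
    S = Matrix.diagonal d * (σ.permMatrix ℝ)ᵀ * E12 k * σ.permMatrix ℝ * Matrix.diagonal d


lemma copositive_isClosed (n : ℕ) :
    IsClosed {B : Matrix (Fin n) (Fin n) ℝ | Copositive B} := by
  have : {B : Matrix (Fin n) (Fin n) ℝ | Copositive B} =
      {B : Matrix (Fin n) (Fin n) ℝ | B.IsSymm} ∩
      ⋂ x ∈ {x : Fin n → ℝ | ∀ i, 0 ≤ x i},
        {B : Matrix (Fin n) (Fin n) ℝ | 0 ≤ x ⬝ᵥ B.mulVec x} := by
    ext B
    simp only [Set.mem_setOf_eq, Set.mem_inter_iff, Set.mem_iInter, Copositive]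
  rw [this]
  refine IsClosed.inter ?_ (isClosed_biInter fun x _ => ?_)
  · have : Continuous fun B : Matrix (Fin n) (Fin n) ℝ => Bᵀ :=
      continuous_id.matrix_transpose
    exact isClosed_eq this continuous_id
  · exact isClosed_le continuous_const
      ((continuous_const : Continuous fun _ : Matrix (Fin n) (Fin n) ℝ => x).dotProduct
        (continuous_id.matrix_mulVec continuous_const))

lemma zero_support {n : ℕ} {A : Matrix (Fin n) (Fin n) ℝ} (hA : Copositive A)
    {x : Fin n → ℝ} (hx : ∀ i, 0 ≤ x i) (h0 : x ⬝ᵥ A.mulVec x = 0) (i : Fin n) :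
    A i i * x i ≤ ∑ j ∈ Finset.univ.erase i, |A i j| * x j := by
  rcases eq_or_lt_of_le (hx i) with h | h
  · rw [← h, mul_zero]
    exact Finset.sum_nonneg fun j _ => mul_nonneg (abs_nonneg _) (hx j)
  · set c : ℝ := A.mulVec x i with hc
    set e : Fin n → ℝ := Pi.single i 1 with he
    have hsymdot : x ⬝ᵥ A.mulVec e = c := by
      rw [he, Matrix.mulVec_single, hc]
      simp only [Matrix.mulVec, dotProduct, mul_one, Pi.smul_apply, MulOpposite.op_one, one_smul, Matrix.col_apply]
      exact Finset.sum_congr rfl fun j _ => by rw [hA.1.apply i j]; ring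
    have key : ∀ t : ℝ, |t| ≤ x i → 0 ≤ 2 * c * t + t ^ 2 * A i i := by
      intro t ht
      have hy : ∀ j, 0 ≤ (x + t • e) j := by
        intro j
        by_cases hj : j = i
        · subst hj
          simp only [he, Pi.add_apply, Pi.smul_apply, Pi.single_eq_same, smul_eq_mul, mul_one]
          have := (abs_le.mp ht).1
          linarith
        · simp [he, Pi.single_apply, hj, hx j]
      have h2 := hA.2 _ hy
      have expand : (x + t • e) ⬝ᵥ A.mulVec (x + t • e)
          = x ⬝ᵥ A.mulVec x + t * (x ⬝ᵥ A.mulVec e)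
            + t * c + t ^ 2 * A i i := by
        rw [Matrix.mulVec_add, Matrix.mulVec_smul, dotProduct_add,
          add_dotProduct, add_dotProduct, dotProduct_smul,
          dotProduct_smul, smul_dotProduct, smul_dotProduct]
        have e1 : e ⬝ᵥ A.mulVec x = c := by
          rw [he, single_dotProduct, hc]; ring
        have e2 : e ⬝ᵥ A.mulVec e = A i i := by
          rw [he, Matrix.mulVec_single, single_dotProduct]; simp
        rw [e1, e2]
        simp only [smul_eq_mul]
        ring
      rw [expand, h0, hsymdot] at h2
      nlinarith [h2]
    have hc0 : c = 0 := by
      by_contra hne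
      set δ : ℝ := min (x i / (|c| + 1)) (1 / (|A i i| + 1)) with hδ
      have hcpos : 0 < |c| := abs_pos.mpr hne
      have hδpos : 0 < δ := by
        apply lt_min
        · positivity
        · positivity
      have ht1 : |(-(c * δ))| ≤ x i := by
        rw [abs_neg, abs_mul, abs_of_pos hδpos]
        have hle : δ ≤ x i / (|c| + 1) := min_le_left _ _
        have h1 : |c| * δ ≤ |c| * (x i / (|c| + 1)) :=
          mul_le_mul_of_nonneg_left hle (abs_nonneg c)
        have h2 : |c| * (x i / (|c| + 1)) ≤ x i := by
          rw [mul_div_assoc']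
          rw [div_le_iff₀ (by positivity)]
          nlinarith [h.le]
        linarith
      have hk := key (-(c * δ)) ht1
      have hδA : δ * |A i i| ≤ 1 := by
        have hle : δ ≤ 1 / (|A i i| + 1) := min_le_right _ _
        have h1 : δ * |A i i| ≤ (1 / (|A i i| + 1)) * |A i i| :=
          mul_le_mul_of_nonneg_right hle (abs_nonneg _)
        have h2 : (1 / (|A i i| + 1)) * |A i i| ≤ 1 := by
          rw [div_mul_eq_mul_div, div_le_one (by positivity)]
          linarith
        linarith
      have hAle : A i i ≤ |A i i| := le_abs_self _
      have hδAii : δ * A i i ≤ 1 :=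
        le_trans (mul_le_mul_of_nonneg_left hAle hδpos.le) hδA
      have hcsq : (0:ℝ) < c ^ 2 := by
        have := mul_pos hcpos hcpos
        rwa [abs_mul_abs_self, ← sq] at this
      have hcc : 0 < c ^ 2 * δ := mul_pos hcsq hδpos
      nlinarith [hk, hcc, mul_le_mul_of_nonneg_left hδAii hcc.le]
    have hsplit : A i i * x i + ∑ j ∈ Finset.univ.erase i, A i j * x j = 0 := by
      have hceq : c = ∑ j, A i j * x j := by
        rw [hc]; simp [Matrix.mulVec, dotProduct]
      rw [hc0] at hceq
      rw [← Finset.add_sum_erase Finset.univ (fun j => A i j * x j) (Finset.mem_univ i)] at hceq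
      linarith [hceq]
    have hbound : -∑ j ∈ Finset.univ.erase i, A i j * x j
        ≤ ∑ j ∈ Finset.univ.erase i, |A i j| * x j := by
      rw [← Finset.sum_neg_distrib]
      apply Finset.sum_le_sum
      intro j _
      have hna : -(A i j) ≤ |A i j| := neg_le_abs _
      nlinarith [hx j, abs_nonneg (A i j)]
    linarith

theorem stmt4 {n : ℕ} (A M : Matrix (Fin n) (Fin n) ℝ) (hA0 : A ≠ 0)
    (hAbd : A ∈ frontier {B : Matrix (Fin n) (Fin n) ℝ | Copositive B})
    (hM : CompletelyPositive M) (hrows : ∀ i, ∃ j, M i j ≠ 0)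
    (horth : Matrix.trace (Mᵀ * A) = 0) :
    ∃ d : Fin n → ℝ, (∀ i, 0 < d i) ∧
      ∀ i : Fin n,
        ((Matrix.diagonal fun j => (d j)⁻¹) * A * (Matrix.diagonal fun j => (d j)⁻¹)) i i ≤
          ∑ j ∈ Finset.univ.erase i,
            |((Matrix.diagonal fun j => (d j)⁻¹) * A * (Matrix.diagonal fun j => (d j)⁻¹)) i j| := by
  obtain ⟨p, v, hv, hMv⟩ := hM
  have hAco : Copositive A := by
    have := frontier_subset_closure hAbd
    rwa [IsClosed.closure_eq (copositive_isClosed n)] at this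
  have hMentry : ∀ i j, M i j = ∑ k, v k i * v k j := by
    intro i j
    rw [hMv]
    simp [Matrix.sum_apply, Matrix.vecMulVec_apply]
  have hqsum : ∑ k, v k ⬝ᵥ A.mulVec (v k) = 0 := by
    have htr : Matrix.trace (Mᵀ * A) = ∑ i, ∑ j, M j i * A j i := by
      simp [Matrix.trace, Matrix.mul_apply, Matrix.diag]
    have hsum : ∑ k, v k ⬝ᵥ A.mulVec (v k) = ∑ i, ∑ j, M j i * A j i := by
      rw [Finset.sum_comm]
      simp only [dotProduct, Matrix.mulVec, Finset.mul_sum, Finset.sum_mul]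
      rw [Finset.sum_comm]
      apply Finset.sum_congr rfl
      intro q _
      rw [Finset.sum_comm]
      apply Finset.sum_congr rfl
      intro pp _
      rw [hMentry q pp, Finset.sum_mul]
      apply Finset.sum_congr rfl
      intro k _
      ring
    rw [hsum] at *
    linarith [htr, horth]
  have hq0 : ∀ k, v k ⬝ᵥ A.mulVec (v k) = 0 := by
    have hnn : ∀ k ∈ Finset.univ, (0:ℝ) ≤ v k ⬝ᵥ A.mulVec (v k) :=
      fun k _ => hAco.2 (v k) (hv k)
    intro k
    exact (Finset.sum_eq_zero_iff_of_nonneg hnn).mp hqsum k (Finset.mem_univ k)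
  have hkey : ∀ i k, A i i * v k i ≤ ∑ j ∈ Finset.univ.erase i, |A i j| * v k j :=
    fun i k => zero_support hAco (hv k) (hq0 k) i
  have hMnn : ∀ i j, 0 ≤ M i j := by
    intro i j
    rw [hMentry]
    exact Finset.sum_nonneg fun k _ => mul_nonneg (hv k i) (hv k j)
  have hMii : ∀ i, 0 < M i i := by
    intro i
    obtain ⟨j, hj⟩ := hrows i
    rw [hMentry] at hj
    obtain ⟨k, -, hk⟩ := Finset.exists_ne_zero_of_sum_ne_zero hj
    have hki : v k i ≠ 0 := fun h => hk (by rw [h, zero_mul])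
    calc (0:ℝ) < v k i * v k i := mul_self_pos.mpr hki
      _ ≤ ∑ k, v k i * v k i :=
        Finset.single_le_sum (fun l _ => mul_self_nonneg (v l i)) (Finset.mem_univ k)
      _ = M i i := (hMentry i i).symm
  have hCS : ∀ i j, M i j ≤ Real.sqrt (M i i) * Real.sqrt (M j j) := by
    intro i j
    have h1 : (M i j) ^ 2 ≤ M i i * M j j := by
      rw [hMentry i j, hMentry i i, hMentry j j]
      have := Finset.sum_mul_sq_le_sq_mul_sq Finset.univ (fun k => v k i) (fun k => v k j)
      simpa [pow_two] using this
    have h2 : M i j = Real.sqrt ((M i j) ^ 2) := by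
      rw [Real.sqrt_sq (hMnn i j)]
    calc M i j = Real.sqrt ((M i j)^2) := h2
      _ ≤ Real.sqrt (M i i * M j j) := Real.sqrt_le_sqrt h1
      _ = Real.sqrt (M i i) * Real.sqrt (M j j) := Real.sqrt_mul (hMii i).le _
  have hmain : ∀ i, A i i * M i i ≤
      ∑ j ∈ Finset.univ.erase i, |A i j| * (Real.sqrt (M i i) * Real.sqrt (M j j)) := by
    intro i
    have step1 : A i i * M i i ≤ ∑ j ∈ Finset.univ.erase i, |A i j| * M i j := by
      have h1 : A i i * M i i = ∑ k, (A i i * v k i) * v k i := by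
        rw [hMentry i i, Finset.mul_sum]
        exact Finset.sum_congr rfl fun k _ => by ring
      have h2 : ∀ k, (A i i * v k i) * v k i
          ≤ (∑ j ∈ Finset.univ.erase i, |A i j| * v k j) * v k i :=
        fun k => mul_le_mul_of_nonneg_right (hkey i k) (hv k i)
      have h3 : ∑ k, (∑ j ∈ Finset.univ.erase i, |A i j| * v k j) * v k i
          = ∑ j ∈ Finset.univ.erase i, |A i j| * M i j := by
        simp_rw [Finset.sum_mul]
        rw [Finset.sum_comm]
        apply Finset.sum_congr rfl
        intro j _
        rw [hMentry i j, Finset.mul_sum]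
        exact Finset.sum_congr rfl fun k _ => by ring
      rw [h1, ← h3]
      exact Finset.sum_le_sum fun k _ => h2 k
    refine step1.trans (Finset.sum_le_sum fun j _ => ?_)
    exact mul_le_mul_of_nonneg_left (hCS i j) (abs_nonneg _)
  refine ⟨fun i => (Real.sqrt (M i i))⁻¹, fun i => inv_pos.mpr (Real.sqrt_pos.mpr (hMii i)), ?_⟩
  intro i
  have hinv : ∀ j, (((Real.sqrt (M j j))⁻¹)⁻¹ : ℝ) = Real.sqrt (M j j) := fun j => inv_inv _
  have hentry : ∀ a b : Fin n,
      ((Matrix.diagonal fun j => (((Real.sqrt (M j j))⁻¹ : ℝ))⁻¹) * A *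
        (Matrix.diagonal fun j => (((Real.sqrt (M j j))⁻¹ : ℝ))⁻¹)) a b
      = Real.sqrt (M a a) * A a b * Real.sqrt (M b b) := by
    intro a b
    rw [Matrix.mul_diagonal, Matrix.diagonal_mul, hinv a, hinv b]
  rw [hentry i i]
  have hrw : ∀ j, |Real.sqrt (M i i) * A i j * Real.sqrt (M j j)|
      = |A i j| * (Real.sqrt (M i i) * Real.sqrt (M j j)) := by
    intro j
    rw [abs_mul, abs_mul, abs_of_nonneg (Real.sqrt_nonneg _), abs_of_nonneg (Real.sqrt_nonneg _)]
    ring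
  calc Real.sqrt (M i i) * A i i * Real.sqrt (M i i)
        = A i i * (Real.sqrt (M i i) * Real.sqrt (M i i)) := by ring
    _ = A i i * M i i := by rw [Real.mul_self_sqrt (hMii i).le]
    _ ≤ ∑ j ∈ Finset.univ.erase i, |A i j| * (Real.sqrt (M i i) * Real.sqrt (M j j)) := hmain i
    _ = ∑ j ∈ Finset.univ.erase i,
          |((Matrix.diagonal fun j => (((Real.sqrt (M j j))⁻¹ : ℝ))⁻¹) * A *
            (Matrix.diagonal fun j => (((Real.sqrt (M j j))⁻¹ : ℝ))⁻¹)) i j| := by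
        apply Finset.sum_congr rfl
        intro j _
        rw [hentry i j, hrw j]
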